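/- For every integer j ≥ 2: N(−F_1, +F_j) + N(+F_1, +F_j) = N(+F_j) − N(+F_{j−1}); that is, the number of nonzero integers whose far-difference representation has largest-index summand +F_j and smallest-index summand ±F_1 equals the number with largest-index summand +F_j minus the number with largest-index summand +F_{j−1}. -/
import Mathlib


/-- The Fibonacci numbers indexed as `F 1 = 1, F 2 = 2, F 3 = 3, F 4 = 5, …`,
so `F (n+1) = F n + F (n-1)`. -/
def F (n : ℕ) : ℕ := Nat.fib (n + 1)

/-- `(P, N)` encodes a far-difference representation: `P` is the set of indices of
positive summands and `N` the set of indices of negative summands; all indices are `≥ 1`,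
same-sign indices differ by at least `4`, and opposite-sign indices differ by at least `3`. -/
def IsFarDiff (P N : Finset ℕ) : Prop :=
  (∀ i ∈ P, 1 ≤ i) ∧ (∀ i ∈ N, 1 ≤ i) ∧
  (∀ i ∈ P, ∀ j ∈ P, i < j → 4 ≤ j - i) ∧
  (∀ i ∈ N, ∀ j ∈ N, i < j → 4 ≤ j - i) ∧
  (∀ i ∈ P, ∀ j ∈ N, (i < j → 3 ≤ j - i) ∧ (j < i → 3 ≤ i - j) ∧ i ≠ j)

/-- The integer represented by the far-difference data `(P, N)`:
`∑_{i ∈ P} F i − ∑_{i ∈ N} F i`. -/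
def fdVal (P N : Finset ℕ) : ℤ :=
  (∑ i ∈ P, (F i : ℤ)) - ∑ i ∈ N, (F i : ℤ)

/-- `S n = F n + F (n-4) + F (n-8) + ⋯`, the sum over positive indices, with `S 0 = 0`. -/
def S : ℕ → ℕ
  | 0 => 0
  | n + 1 => F (n + 1) + S (n + 1 - 4)

/-- The summand `ε F i` occurs in the representation `(P, N)`:
`i ∈ P` if `ε = 1`, and `i ∈ N` if `ε = -1`. -/
def SignedMem (ε : ℤ) (i : ℕ) (P N : Finset ℕ) : Prop :=
  (ε = 1 ∧ i ∈ P) ∨ (ε = -1 ∧ i ∈ N)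

/-- The set of (nonzero) integers whose far-difference representation has smallest-index
summand `ε F i` and largest-index summand `ε' F j`. -/
def fdSet (ε : ℤ) (i : ℕ) (ε' : ℤ) (j : ℕ) : Set ℤ :=
  {m : ℤ | ∃ P N : Finset ℕ, IsFarDiff P N ∧ fdVal P N = m ∧
    SignedMem ε i P N ∧ SignedMem ε' j P N ∧ ∀ r ∈ P ∪ N, i ≤ r ∧ r ≤ j}

/-- `N(ε F i, ε' F j)`: the number of nonzero integers whose far-difference
representation has smallest-index summand `ε F i` and largest-index summand `ε' F j`. -/
noncomputable def fdCount (ε : ℤ) (i : ℕ) (ε' : ℤ) (j : ℕ) : ℕ :=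
  (fdSet ε i ε' j).ncard

/-- The set of (nonzero) integers whose far-difference representation has largest-index
summand `ε' F j`. -/
def fdTopSet (ε' : ℤ) (j : ℕ) : Set ℤ :=
  {m : ℤ | ∃ P N : Finset ℕ, IsFarDiff P N ∧ fdVal P N = m ∧
    SignedMem ε' j P N ∧ ∀ r ∈ P ∪ N, r ≤ j}

/-- `N(ε' F j)`: the number of nonzero integers whose far-difference representation has
largest-index summand `ε' F j`. -/
noncomputable def fdTopCount (ε' : ℤ) (j : ℕ) : ℕ :=
  (fdTopSet ε' j).ncard

lemma isFarDiff_swap {P N : Finset ℕ} (h : IsFarDiff P N) : IsFarDiff N P := by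
  obtain ⟨h1, h2, h3, h4, h5⟩ := h
  refine ⟨h2, h1, h4, h3, fun i hi j hj => ?_⟩
  exact ⟨(h5 j hj i hi).2.1, (h5 j hj i hi).1, (h5 j hj i hi).2.2.symm⟩

lemma fdVal_swap (P N : Finset ℕ) : fdVal N P = -fdVal P N := by
  simp [fdVal]

lemma isFarDiff_mono {P N P' N' : Finset ℕ} (h : IsFarDiff P N) (hP : P' ⊆ P) (hN : N' ⊆ N) :
    IsFarDiff P' N' := by
  obtain ⟨h1, h2, h3, h4, h5⟩ := h
  exact ⟨fun i hi => h1 i (hP hi), fun i hi => h2 i (hN hi),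
    fun i hi j hj => h3 i (hP hi) j (hP hj), fun i hi j hj => h4 i (hN hi) j (hN hj),
    fun i hi j hj => h5 i (hP hi) j (hN hj)⟩

lemma top_decomp {P N : Finset ℕ} (hfd : IsFarDiff P N) {t : ℕ} (ht : t ∈ P)
    (hmax : ∀ r ∈ P ∪ N, r ≤ t) :
    IsFarDiff (P.erase t) N ∧ ((P.erase t) ∪ N).card + 1 = (P ∪ N).card ∧
    (∀ i ∈ P.erase t, i ≤ t - 4) ∧ (∀ i ∈ N, i ≤ t - 3) ∧ 1 ≤ t ∧
    fdVal P N = F t + fdVal (P.erase t) N := by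
  obtain ⟨h1, h2, h3, h4, h5⟩ := hfd
  have htN : t ∉ N := fun htN => (h5 t ht t htN).2.2 rfl
  have hU : (P.erase t) ∪ N = (P ∪ N).erase t := by
    ext x
    simp only [Finset.mem_union, Finset.mem_erase]
    constructor
    · rintro (⟨hx, hxP⟩ | hxN)
      · exact ⟨hx, Or.inl hxP⟩
      · exact ⟨fun h => htN (h ▸ hxN), Or.inr hxN⟩
    · rintro ⟨hx, hxP | hxN⟩
      · exact Or.inl ⟨hx, hxP⟩
      · exact Or.inr hxN
  refine ⟨isFarDiff_mono ⟨h1,h2,h3,h4,h5⟩ (Finset.erase_subset _ _) le_rfl, ?_, ?_, ?_, h1 t ht, ?_⟩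
  · rw [hU]
    exact Finset.card_erase_add_one (Finset.mem_union_left _ ht)
  · intro i hi
    obtain ⟨hit, hiP⟩ := Finset.mem_erase.mp hi
    have : i < t := lt_of_le_of_ne (hmax i (Finset.mem_union_left _ hiP)) hit
    have := h3 i hiP t ht this
    omega
  · intro i hi
    have hile : i ≤ t := hmax i (Finset.mem_union_right _ hi)
    have hne : t ≠ i := (h5 t ht i hi).2.2
    have : i < t := lt_of_le_of_ne hile (Ne.symm hne)
    have := (h5 t ht i hi).2.1 this
    omega
  · unfold fdVal
    rw [← Finset.add_sum_erase _ _ ht]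
    ring

lemma S_zero : S 0 = 0 := by rw [S]
lemma S_succ (n : ℕ) : S (n+1) = F (n+1) + S (n+1-4) := by rw [S]
lemma F_val (n : ℕ) : F n = Nat.fib (n+1) := rfl
lemma S_one : S 1 = 1 := by rw [S_succ]; norm_num [S_zero, F_val]
lemma F_mono : Monotone F := fun a b h => Nat.fib_mono (by omega)
lemma S_mono : Monotone S := by
  have h : ∀ n, S n ≤ S (n+1) := by
    intro n
    induction n using Nat.strong_induction_on with
    | _ n ih =>
      match n with
      | 0 => rw [S_zero]; omega
      | n+1 =>
        rw [S_succ, S_succ]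
        have h1 : F (n+1) ≤ F (n+1+1) := F_mono (by omega)
        rcases Nat.lt_or_ge n 3 with h4 | h4
        · have e1 : n+1-4 = 0 := by omega
          have e2 : n+1+1-4 = 0 ∨ n+1+1-4 = 1 := by omega
          rcases e2 with e2 | e2 <;> rw [e1, e2, S_zero] <;> simp [S_zero, S_one] <;> omega
        · have h2 : S (n+1-4) ≤ S (n+1+1-4) := by
            have := ih (n+1-4) (by omega)
            have e : n+1-4+1 = n+1+1-4 := by omega
            rwa [e] at this
          omega
  exact monotone_nat_of_le_succ h
lemma S_two : S 2 = 2 := by rw [S_succ]; norm_num [S_zero, F_val]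
lemma S_three : S 3 = 3 := by rw [S_succ]; norm_num [S_zero, F_val]
lemma F_ge (n : ℕ) : F n ≥ S (n-1) + S (n-3) + 1 := by
  induction n using Nat.strong_induction_on with
  | _ n ih =>
    match n with
    | 0 => simp [S_zero, F_val]
    | 1 => simp [S_zero, F_val]
    | 2 => simp [show (2:ℕ)-1=1 from rfl, show (2:ℕ)-3=0 from rfl, S_zero, S_one, F_val]; decide
    | 3 => simp [show (3:ℕ)-1=2 from rfl, show (3:ℕ)-3=0 from rfl, S_zero, S_two, F_val]; decide
    | 4 => simp [show (4:ℕ)-1=3 from rfl, show (4:ℕ)-3=1 from rfl, S_one, S_three, F_val]; decide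
    | (n+5) =>
      have ih3 : F (n+3) ≥ S (n+2) + S n + 1 := by
        have := ih (n+3) (by omega)
        simpa [show n+3-1 = n+2 by omega, show n+3-3 = n by omega] using this
      have hF : F (n+5) = F (n+4) + F (n+3) := by
        show Nat.fib (n+6) = Nat.fib (n+5) + Nat.fib (n+4)
        rw [show n+6 = (n+4)+2 by ring, Nat.fib_add_two,
          show n+4+1 = n+5 from rfl]; omega
      have hS4 : S (n+4) = F (n+4) + S n := by
        rw [show n+4 = (n+3)+1 from rfl, S_succ, show n+3+1-4 = n by omega]
      simp only [show n+5-1 = n+4 by omega, show n+5-3 = n+2 by omega]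
      omega

lemma S_eq {t : ℕ} (h : 1 ≤ t) : S t = F t + S (t-4) := by
  obtain ⟨s, rfl⟩ : ∃ s, t = s + 1 := ⟨t - 1, by omega⟩
  exact S_succ s

lemma fdVal_bounds : ∀ n (P N : Finset ℕ), (P ∪ N).card ≤ n → IsFarDiff P N →
    ∀ a b : ℕ, (∀ i ∈ P, i ≤ a) → (∀ i ∈ N, i ≤ b) →
    -(S b : ℤ) ≤ fdVal P N ∧ fdVal P N ≤ S a := by
  intro n
  induction n with
  | zero =>
    intro P N hcard _ a b _ _
    have : P ∪ N = ∅ := Finset.card_eq_zero.mp (Nat.le_zero.mp hcard)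
    have hP : P = ∅ := by
      have := Finset.union_eq_empty.mp this; exact this.1
    have hN : N = ∅ := (Finset.union_eq_empty.mp this).2
    subst hP; subst hN
    have h0 : fdVal ∅ ∅ = 0 := by simp [fdVal]
    rw [h0]
    omega
  | succ n ih =>
    intro P N hcard hfd a b hPa hNb
    by_cases hne : (P ∪ N).Nonempty
    · set t := (P ∪ N).max' hne with hts
      have htm : t ∈ P ∪ N := (P ∪ N).max'_mem hne
      have hmax : ∀ r ∈ P ∪ N, r ≤ t := fun r hr => (P ∪ N).le_max' r hr
      have key : ∀ (P' N' : Finset ℕ), IsFarDiff P' N' → t ∈ P' →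
          (P' ∪ N' ).card ≤ n + 1 → (∀ r ∈ P' ∪ N', r ≤ t) →
          ∀ a' b' : ℕ, (∀ i ∈ P', i ≤ a') → (∀ i ∈ N', i ≤ b') →
          1 ≤ fdVal P' N' ∧ fdVal P' N' ≤ S a' := by
        intro P' N' hfd' ht' hcard' hmax' a' b' hPa' hNb'
        obtain ⟨hfd2, hcard2, hP4, hN3, ht1, hval⟩ := top_decomp hfd' ht' hmax'
        obtain ⟨hlo, hhi⟩ := ih (P'.erase t) N' (by omega) hfd2 (t-4) (t-3) hP4 hN3
        have hta : t ≤ a' := hPa' t ht'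
        have hS : S t = F t + S (t-4) := S_eq ht1
        have hFt : F t ≥ S (t-1) + S (t-3) + 1 := F_ge t
        have hSmono : S t ≤ S a' := S_mono hta
        constructor
        · have : (F t : ℤ) - S (t-3) ≥ 1 := by
            have h0 : (0:ℕ) ≤ S (t-1) := Nat.zero_le _
            push_cast
            omega
          omega
        · have : fdVal P' N' ≤ (F t : ℤ) + S (t-4) := by omega
          have h2 : ((F t : ℤ) + S (t-4)) = S t := by push_cast [hS]; ring
          omega
      rcases Finset.mem_union.mp htm with htP | htN
      · obtain ⟨h1, h2⟩ := key P N hfd htP hcard hmax a b hPa hNb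
        have h0 : (0:ℤ) ≤ S b := by positivity
        omega
      · have hswap := key N P (isFarDiff_swap hfd) htN
          (by rwa [Finset.union_comm]) (by rw [Finset.union_comm]; exact hmax) b a hNb hPa
        rw [fdVal_swap] at hswap
        have h0 : (0:ℤ) ≤ S a := by positivity
        omega
    · have : P ∪ N = ∅ := Finset.not_nonempty_iff_eq_empty.mp hne
      have hP : P = ∅ := (Finset.union_eq_empty.mp this).1
      have hN : N = ∅ := (Finset.union_eq_empty.mp this).2
      subst hP; subst hN
      have h0 : fdVal ∅ ∅ = 0 := by simp [fdVal]
      rw [h0]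
      omega

lemma fdVal_top_pos {P N : Finset ℕ} (hfd : IsFarDiff P N) {t : ℕ} (ht : t ∈ P)
    (hmax : ∀ r ∈ P ∪ N, r ≤ t) :
    (S (t-1) : ℤ) + 1 ≤ fdVal P N ∧ fdVal P N ≤ S t := by
  obtain ⟨hfd2, hcard2, hP4, hN3, ht1, hval⟩ := top_decomp hfd ht hmax
  obtain ⟨hlo, hhi⟩ := fdVal_bounds _ (P.erase t) N le_rfl hfd2 (t-4) (t-3) hP4 hN3
  have hS : S t = F t + S (t-4) := S_eq ht1
  have hFt : F t ≥ S (t-1) + S (t-3) + 1 := F_ge t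
  constructor
  · have : (F t:ℤ) - S (t-3) ≥ (S (t-1):ℤ) + 1 := by push_cast; omega
    omega
  · have h2 : ((F t : ℤ) + S (t-4)) = S t := by push_cast [hS]; ring
    omega

lemma fdVal_top_neg {P N : Finset ℕ} (hfd : IsFarDiff P N) {t : ℕ} (ht : t ∈ N)
    (hmax : ∀ r ∈ P ∪ N, r ≤ t) :
    fdVal P N ≤ -(S (t-1) : ℤ) - 1 ∧ -(S t : ℤ) ≤ fdVal P N := by
  have := fdVal_top_pos (isFarDiff_swap hfd) ht
    (by rw [Finset.union_comm]; exact hmax)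
  rw [fdVal_swap] at this
  omega

lemma fdVal_ne_zero {P N : Finset ℕ} (hfd : IsFarDiff P N) (hne : (P ∪ N).Nonempty) :
    fdVal P N ≠ 0 := by
  set t := (P ∪ N).max' hne with hts
  have htm : t ∈ P ∪ N := (P ∪ N).max'_mem hne
  have hmax : ∀ r ∈ P ∪ N, r ≤ t := fun r hr => (P ∪ N).le_max' r hr
  rcases Finset.mem_union.mp htm with htP | htN
  · have := fdVal_top_pos hfd htP hmax
    omega
  · have := fdVal_top_neg hfd htN hmax
    omega

lemma empty_of_fdVal_zero {P N : Finset ℕ} (hfd : IsFarDiff P N) (h : fdVal P N = 0) :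
    P = ∅ ∧ N = ∅ := by
  by_cases hne : (P ∪ N).Nonempty
  · exact absurd h (fdVal_ne_zero hfd hne)
  · have : P ∪ N = ∅ := Finset.not_nonempty_iff_eq_empty.mp hne
    exact Finset.union_eq_empty.mp this

lemma fdVal_inj_aux : ∀ n (P N P' N' : Finset ℕ), (P ∪ N).card ≤ n →
    IsFarDiff P N → IsFarDiff P' N' → fdVal P N = fdVal P' N' → P = P' ∧ N = N' := by
  intro n
  induction n with
  | zero =>
    intro P N P' N' hcard hfd hfd' heq
    have : P ∪ N = ∅ := Finset.card_eq_zero.mp (Nat.le_zero.mp hcard)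
    obtain ⟨hP, hN⟩ := Finset.union_eq_empty.mp this
    subst hP; subst hN
    have h0 : fdVal (∅:Finset ℕ) ∅ = 0 := by simp [fdVal]
    obtain ⟨hP', hN'⟩ := empty_of_fdVal_zero hfd' (by rw [← heq, h0])
    exact ⟨hP'.symm, hN'.symm⟩
  | succ n ih =>
    intro P N P' N' hcard hfd hfd' heq
    by_cases hne : (P ∪ N).Nonempty
    swap
    · have : P ∪ N = ∅ := Finset.not_nonempty_iff_eq_empty.mp hne
      obtain ⟨hP, hN⟩ := Finset.union_eq_empty.mp this
      subst hP; subst hN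
      have h0 : fdVal (∅:Finset ℕ) ∅ = 0 := by simp [fdVal]
      obtain ⟨hP', hN'⟩ := empty_of_fdVal_zero hfd' (by rw [← heq, h0])
      exact ⟨hP'.symm, hN'.symm⟩
    have hne' : (P' ∪ N').Nonempty := by
      by_contra h
      have : P' ∪ N' = ∅ := Finset.not_nonempty_iff_eq_empty.mp h
      obtain ⟨hP', hN'⟩ := Finset.union_eq_empty.mp this
      subst hP'; subst hN'
      have h0 : fdVal (∅:Finset ℕ) ∅ = 0 := by simp [fdVal]
      exact fdVal_ne_zero hfd hne (by rw [heq, h0])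
    have main : ∀ (Q R Q' R' : Finset ℕ), IsFarDiff Q R → IsFarDiff Q' R' →
        (Q ∪ R).card ≤ n + 1 → fdVal Q R = fdVal Q' R' →
        ∀ t t', t ∈ Q → (∀ r ∈ Q ∪ R, r ≤ t) → t' ∈ Q' → (∀ r ∈ Q' ∪ R', r ≤ t') →
        Q = Q' ∧ R = R' := by
      intro Q R Q' R' hfd1 hfd1' hc he t t' ht hmax ht' hmax'
      have h1 := fdVal_top_pos hfd1 ht hmax
      have h2 := fdVal_top_pos hfd1' ht' hmax'
      have htt : t = t' := by
        by_contra hnee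
        rcases Nat.lt_or_ge t t' with hlt | hge
        · have hm : S t ≤ S (t'-1) := S_mono (by omega)
          omega
        · have hlt : t' < t := by omega
          have hm : S t' ≤ S (t-1) := S_mono (by omega)
          omega
      subst htt
      obtain ⟨hfd2, hcard2, _, _, _, hval⟩ := top_decomp hfd1 ht hmax
      obtain ⟨hfd2', _, _, _, _, hval'⟩ := top_decomp hfd1' ht' hmax'
      have heq2 : fdVal (Q.erase t) R = fdVal (Q'.erase t) R' := by
        rw [hval, hval'] at he
        omega
      obtain ⟨hPe, hNe⟩ := ih _ _ _ _ (by omega) hfd2 hfd2' heq2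
      refine ⟨?_, hNe⟩
      rw [← Finset.insert_erase ht, ← Finset.insert_erase ht', hPe]
    set t := (P ∪ N).max' hne with hts
    have htm : t ∈ P ∪ N := (P ∪ N).max'_mem hne
    have hmax : ∀ r ∈ P ∪ N, r ≤ t := fun r hr => (P ∪ N).le_max' r hr
    set t' := (P' ∪ N').max' hne' with hts'
    have htm' : t' ∈ P' ∪ N' := (P' ∪ N').max'_mem hne'
    have hmax' : ∀ r ∈ P' ∪ N', r ≤ t' := fun r hr => (P' ∪ N').le_max' r hr
    rcases Finset.mem_union.mp htm with htP | htN <;> rcases Finset.mem_union.mp htm' with htP' | htN'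
    · exact main P N P' N' hfd hfd' hcard heq t t' htP hmax htP' hmax'
    · have h1 := fdVal_top_pos hfd htP hmax
      have h2 := fdVal_top_neg hfd' htN' hmax'
      omega
    · have h1 := fdVal_top_neg hfd htN hmax
      have h2 := fdVal_top_pos hfd' htP' hmax'
      omega
    · have hmain := main N P N' P' (isFarDiff_swap hfd) (isFarDiff_swap hfd')
        (by rwa [Finset.union_comm]) (by rw [fdVal_swap P N, fdVal_swap P' N', heq]) t t' htN
        (by rw [Finset.union_comm]; exact hmax) htN' (by rw [Finset.union_comm]; exact hmax')
      exact ⟨hmain.2, hmain.1⟩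

lemma fdVal_inj {P N P' N' : Finset ℕ} (hfd : IsFarDiff P N) (hfd' : IsFarDiff P' N')
    (heq : fdVal P N = fdVal P' N') : P = P' ∧ N = N' :=
  fdVal_inj_aux (P ∪ N).card P N P' N' le_rfl hfd hfd' heq

-- σ : shift indices down by one
def shiftPair (pq : Finset ℕ × Finset ℕ) : Finset ℕ × Finset ℕ :=
  (pq.1.image (· - 1), pq.2.image (· - 1))

def unshift (A : Finset ℕ) : Finset ℕ := A.image (· + 1)

lemma unshift_shift (A : Finset ℕ) (h : ∀ x ∈ A, 1 ≤ x) : unshift (A.image (· - 1)) = A := by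
  ext y
  simp only [unshift, Finset.mem_image]
  constructor
  · rintro ⟨z, ⟨x, hx, hxz⟩, hzy⟩
    have := h x hx
    have e : y = x := by omega
    rwa [e]
  · intro hy
    exact ⟨y - 1, ⟨y, hy, rfl⟩, by have := h y hy; omega⟩

lemma shift_unshift (A : Finset ℕ) : (unshift A).image (· - 1) = A := by
  ext y
  simp only [unshift, Finset.mem_image]
  constructor
  · rintro ⟨z, ⟨x, hx, hxz⟩, hzy⟩
    have e : y = x := by omega
    rwa [e]
  · intro hy
    exact ⟨y + 1, ⟨y, hy, rfl⟩, rfl⟩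

lemma shift_farDiff {P N : Finset ℕ} (hfd : IsFarDiff P N) (h2 : ∀ r ∈ P ∪ N, 2 ≤ r) :
    IsFarDiff (P.image (· - 1)) (N.image (· - 1)) := by
  obtain ⟨h1, h1', h3, h4, h5⟩ := hfd
  have hP2 : ∀ x ∈ P, 2 ≤ x := fun x hx => h2 x (Finset.mem_union_left _ hx)
  have hN2 : ∀ x ∈ N, 2 ≤ x := fun x hx => h2 x (Finset.mem_union_right _ hx)
  refine ⟨?_, ?_, ?_, ?_, ?_⟩
  · rintro i hi
    obtain ⟨x, hx, rfl⟩ := Finset.mem_image.mp hi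
    have := hP2 x hx; omega
  · rintro i hi
    obtain ⟨x, hx, rfl⟩ := Finset.mem_image.mp hi
    have := hN2 x hx; omega
  · rintro i hi j hj hij
    obtain ⟨x, hx, rfl⟩ := Finset.mem_image.mp hi
    obtain ⟨y, hy, rfl⟩ := Finset.mem_image.mp hj
    have hx2 := hP2 x hx; have hy2 := hP2 y hy
    have := h3 x hx y hy (by omega); omega
  · rintro i hi j hj hij
    obtain ⟨x, hx, rfl⟩ := Finset.mem_image.mp hi
    obtain ⟨y, hy, rfl⟩ := Finset.mem_image.mp hj
    have hx2 := hN2 x hx; have hy2 := hN2 y hy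
    have := h4 x hx y hy (by omega); omega
  · rintro i hi j hj
    obtain ⟨x, hx, rfl⟩ := Finset.mem_image.mp hi
    obtain ⟨y, hy, rfl⟩ := Finset.mem_image.mp hj
    have hx2 := hP2 x hx; have hy2 := hN2 y hy
    obtain ⟨c1, c2, c3⟩ := h5 x hx y hy
    refine ⟨fun h => by have := c1 (by omega); omega,
      fun h => by have := c2 (by omega); omega, by omega⟩

lemma unshift_farDiff {P N : Finset ℕ} (hfd : IsFarDiff P N) :
    IsFarDiff (unshift P) (unshift N) := by
  obtain ⟨h1, h1', h3, h4, h5⟩ := hfd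
  refine ⟨?_, ?_, ?_, ?_, ?_⟩
  · rintro i hi
    obtain ⟨x, hx, rfl⟩ := Finset.mem_image.mp hi
    omega
  · rintro i hi
    obtain ⟨x, hx, rfl⟩ := Finset.mem_image.mp hi
    omega
  · rintro i hi j hj hij
    obtain ⟨x, hx, rfl⟩ := Finset.mem_image.mp hi
    obtain ⟨y, hy, rfl⟩ := Finset.mem_image.mp hj
    have := h3 x hx y hy (by omega); omega
  · rintro i hi j hj hij
    obtain ⟨x, hx, rfl⟩ := Finset.mem_image.mp hi
    obtain ⟨y, hy, rfl⟩ := Finset.mem_image.mp hj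
    have := h4 x hx y hy (by omega); omega
  · rintro i hi j hj
    obtain ⟨x, hx, rfl⟩ := Finset.mem_image.mp hi
    obtain ⟨y, hy, rfl⟩ := Finset.mem_image.mp hj
    obtain ⟨c1, c2, c3⟩ := h5 x hx y hy
    refine ⟨fun h => by have := c1 (by omega); omega,
      fun h => by have := c2 (by omega); omega, by omega⟩


def fdValP (pq : Finset ℕ × Finset ℕ) : ℤ := fdVal pq.1 pq.2

def RTop (j : ℕ) : Set (Finset ℕ × Finset ℕ) :=
  {pq | IsFarDiff pq.1 pq.2 ∧ j ∈ pq.1 ∧ ∀ r ∈ pq.1 ∪ pq.2, r ≤ j}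
def RA (j : ℕ) : Set (Finset ℕ × Finset ℕ) := {pq | pq ∈ RTop j ∧ 1 ∈ pq.1}
def RB (j : ℕ) : Set (Finset ℕ × Finset ℕ) := {pq | pq ∈ RTop j ∧ 1 ∈ pq.2}
def RC (j : ℕ) : Set (Finset ℕ × Finset ℕ) := {pq | pq ∈ RTop j ∧ 1 ∉ pq.1 ∪ pq.2}

lemma signedMem_one {i : ℕ} {P N : Finset ℕ} : SignedMem 1 i P N ↔ i ∈ P := by
  unfold SignedMem
  constructor
  · rintro (⟨_, h⟩ | ⟨h, _⟩)
    · exact h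
    · norm_num at h
  · intro h; exact Or.inl ⟨rfl, h⟩

lemma signedMem_negone {i : ℕ} {P N : Finset ℕ} : SignedMem (-1) i P N ↔ i ∈ N := by
  unfold SignedMem
  constructor
  · rintro (⟨h, _⟩ | ⟨_, h⟩)
    · norm_num at h
    · exact h
  · intro h; exact Or.inr ⟨rfl, h⟩

lemma topSet_eq (j : ℕ) : fdTopSet 1 j = fdValP '' RTop j := by
  ext m
  simp only [fdTopSet, Set.mem_setOf_eq, Set.mem_image, signedMem_one]
  constructor
  · rintro ⟨P, N, h1, h2, h3, h4⟩
    exact ⟨(P, N), ⟨h1, h3, h4⟩, h2⟩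
  · rintro ⟨⟨P, N⟩, ⟨h1, h3, h4⟩, h2⟩
    exact ⟨P, N, h1, h2, h3, h4⟩

lemma aSet_eq (j : ℕ) : fdSet 1 1 1 j = fdValP '' RA j := by
  ext m
  simp only [fdSet, Set.mem_setOf_eq, Set.mem_image, signedMem_one]
  constructor
  · rintro ⟨P, N, h1, h2, h3, h4, h5⟩
    exact ⟨(P, N), ⟨⟨h1, h4, fun r hr => (h5 r hr).2⟩, h3⟩, h2⟩
  · rintro ⟨⟨P, N⟩, ⟨⟨h1, h4, h5⟩, h3⟩, h2⟩
    refine ⟨P, N, h1, h2, h3, h4, fun r hr => ⟨?_, h5 r hr⟩⟩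
    rcases Finset.mem_union.mp hr with h | h
    · exact h1.1 r h
    · exact h1.2.1 r h

lemma bSet_eq (j : ℕ) : fdSet (-1) 1 1 j = fdValP '' RB j := by
  ext m
  simp only [fdSet, Set.mem_setOf_eq, Set.mem_image, signedMem_one, signedMem_negone]
  constructor
  · rintro ⟨P, N, h1, h2, h3, h4, h5⟩
    exact ⟨(P, N), ⟨⟨h1, h4, fun r hr => (h5 r hr).2⟩, h3⟩, h2⟩
  · rintro ⟨⟨P, N⟩, ⟨⟨h1, h4, h5⟩, h3⟩, h2⟩
    refine ⟨P, N, h1, h2, h3, h4, fun r hr => ⟨?_, h5 r hr⟩⟩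
    rcases Finset.mem_union.mp hr with h | h
    · exact h1.1 r h
    · exact h1.2.1 r h

lemma injOn_fdValP {s : Set (Finset ℕ × Finset ℕ)} (h : ∀ pq ∈ s, IsFarDiff pq.1 pq.2) :
    Set.InjOn fdValP s := by
  rintro ⟨P, N⟩ ha ⟨P', N'⟩ hb he
  obtain ⟨h1, h2⟩ := fdVal_inj (h _ ha) (h _ hb) he
  simp only [Prod.mk.injEq]
  exact ⟨h1, h2⟩

lemma rtop_finite (j : ℕ) : (RTop j).Finite := by
  apply Set.Finite.subset ((Finset.range (j+1)).powerset ×ˢ (Finset.range (j+1)).powerset).finite_toSet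
  rintro ⟨P, N⟩ ⟨_, _, h3⟩
  simp only [Finset.coe_product, Set.mem_prod, Finset.mem_coe, Finset.mem_powerset]
  constructor
  · intro x hx
    exact Finset.mem_range.mpr (by have := h3 x (Finset.mem_union_left _ hx); omega)
  · intro x hx
    exact Finset.mem_range.mpr (by have := h3 x (Finset.mem_union_right _ hx); omega)

lemma ra_sub (j : ℕ) : RA j ⊆ RTop j := fun pq h => h.1
lemma rb_sub (j : ℕ) : RB j ⊆ RTop j := fun pq h => h.1
lemma rc_sub (j : ℕ) : RC j ⊆ RTop j := fun pq h => h.1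

lemma rtop_split (j : ℕ) : (RTop j).ncard = (RA j).ncard + (RB j).ncard + (RC j).ncard := by
  have hfin := rtop_finite j
  have hU : RTop j = (RA j ∪ RB j) ∪ RC j := by
    ext pq
    constructor
    · intro h
      by_cases h1 : 1 ∈ pq.1
      · exact Or.inl (Or.inl ⟨h, h1⟩)
      · by_cases h2 : 1 ∈ pq.2
        · exact Or.inl (Or.inr ⟨h, h2⟩)
        · exact Or.inr ⟨h, fun hm => by
            rcases Finset.mem_union.mp hm with hm | hm
            · exact h1 hm
            · exact h2 hm⟩
    · rintro ((h | h) | h) <;> exact h.1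
  have hdAB : Disjoint (RA j) (RB j) := by
    rw [Set.disjoint_left]
    rintro pq ⟨hT, h1⟩ ⟨_, h2⟩
    exact (hT.1.2.2.2.2 1 h1 1 h2).2.2 rfl
  have hdC : Disjoint (RA j ∪ RB j) (RC j) := by
    rw [Set.disjoint_left]
    rintro pq (⟨_, h1⟩ | ⟨_, h1⟩) ⟨_, h2⟩
    · exact h2 (Finset.mem_union_left _ h1)
    · exact h2 (Finset.mem_union_right _ h1)
  rw [hU, Set.ncard_union_eq hdC (((hfin.subset (ra_sub j)).union (hfin.subset (rb_sub j))))
      (hfin.subset (rc_sub j)),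
    Set.ncard_union_eq hdAB (hfin.subset (ra_sub j)) (hfin.subset (rb_sub j))]

lemma rc_elems {j : ℕ} {pq : Finset ℕ × Finset ℕ} (h : pq ∈ RC j) :
    ∀ r ∈ pq.1 ∪ pq.2, 2 ≤ r := by
  obtain ⟨⟨hfd, _, _⟩, h1⟩ := h
  intro r hr
  have hr1 : 1 ≤ r := by
    rcases Finset.mem_union.mp hr with hm | hm
    · exact hfd.1 r hm
    · exact hfd.2.1 r hm
  rcases Nat.eq_or_lt_of_le hr1 with he | hl
  · exact absurd (he ▸ hr) h1
  · exact hl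

lemma shift_image (j : ℕ) (hj : 2 ≤ j) : shiftPair '' RC j = RTop (j - 1) := by
  ext pq
  constructor
  · rintro ⟨⟨P, N⟩, hm, rfl⟩
    have h2 := rc_elems hm
    obtain ⟨⟨hfd, hjP, hbd⟩, h1⟩ := hm
    refine ⟨shift_farDiff hfd h2, ?_, ?_⟩
    · exact Finset.mem_image.mpr ⟨j, hjP, rfl⟩
    · rintro r hr
      rcases Finset.mem_union.mp hr with hm' | hm'
      · obtain ⟨x, hx, rfl⟩ := Finset.mem_image.mp hm'
        have := hbd x (Finset.mem_union_left _ hx); omega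
      · obtain ⟨x, hx, rfl⟩ := Finset.mem_image.mp hm'
        have := hbd x (Finset.mem_union_right _ hx); omega
  · rintro ⟨hfd, hjP, hbd⟩
    obtain ⟨P, N⟩ := pq
    refine ⟨(unshift P, unshift N), ⟨⟨unshift_farDiff hfd, ?_, ?_⟩, ?_⟩, ?_⟩
    · show j ∈ unshift P
      have : (j - 1) + 1 = j := by omega
      exact Finset.mem_image.mpr ⟨j - 1, hjP, this⟩
    · rintro r hr
      rcases Finset.mem_union.mp hr with hm' | hm'
      · obtain ⟨x, hx, rfl⟩ := Finset.mem_image.mp hm'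
        have := hbd x (Finset.mem_union_left _ hx); omega
      · obtain ⟨x, hx, rfl⟩ := Finset.mem_image.mp hm'
        have := hbd x (Finset.mem_union_right _ hx); omega
    · intro hm
      rcases Finset.mem_union.mp hm with hm' | hm'
      · obtain ⟨x, hxm, hx⟩ := Finset.mem_image.mp hm'
        have := hfd.1 x hxm; omega
      · obtain ⟨x, hxm, hx⟩ := Finset.mem_image.mp hm'
        have := hfd.2.1 x hxm; omega
    · show (Finset.image _ (unshift P), Finset.image _ (unshift N)) = (P, N)
      rw [Prod.mk.injEq]
      exact ⟨shift_unshift P, shift_unshift N⟩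

lemma shift_injOn (j : ℕ) : Set.InjOn shiftPair (RC j) := by
  rintro ⟨P, N⟩ ha ⟨P', N'⟩ hb he
  have h2a := rc_elems ha
  have h2b := rc_elems hb
  rw [Prod.mk.injEq] at he ⊢
  obtain ⟨he1, he2⟩ := he
  constructor
  · rw [← unshift_shift P (fun x hx => by have := h2a x (Finset.mem_union_left _ hx); omega),
      ← unshift_shift P' (fun x hx => by have := h2b x (Finset.mem_union_left _ hx); omega)]
    exact congrArg unshift he1
  · rw [← unshift_shift N (fun x hx => by have := h2a x (Finset.mem_union_right _ hx); omega),
      ← unshift_shift N' (fun x hx => by have := h2b x (Finset.mem_union_right _ hx); omega)]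
    exact congrArg unshift he2

lemma rc_ncard (j : ℕ) (hj : 2 ≤ j) : (RC j).ncard = (RTop (j - 1)).ncard := by
  rw [← shift_image j hj, Set.ncard_image_of_injOn (shift_injOn j)]


/-- For every `j ≥ 2`,
`N(−F_1, +F_j) + N(+F_1, +F_j) = N(+F_j) − N(+F_{j−1})`. -/
theorem fardifference_inclusion_exclusion (j : ℕ) (hj : 2 ≤ j) :
    (fdCount (-1) 1 1 j : ℤ) + fdCount 1 1 1 j
      = (fdTopCount 1 j : ℤ) - fdTopCount 1 (j - 1) := by
  have hfdRT : ∀ k, ∀ pq ∈ RTop k, IsFarDiff pq.1 pq.2 := fun k pq h => h.1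
  have hTop : ∀ k, fdTopCount 1 k = (RTop k).ncard := by
    intro k
    rw [fdTopCount, topSet_eq, Set.ncard_image_of_injOn (injOn_fdValP (hfdRT k))]
  have hA : fdCount 1 1 1 j = (RA j).ncard := by
    rw [fdCount, aSet_eq, Set.ncard_image_of_injOn
      (injOn_fdValP (fun pq h => (hfdRT j) pq (ra_sub j h)))]
  have hB : fdCount (-1) 1 1 j = (RB j).ncard := by
    rw [fdCount, bSet_eq, Set.ncard_image_of_injOn
      (injOn_fdValP (fun pq h => (hfdRT j) pq (rb_sub j h)))]
  have hsplit := rtop_split j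
  have hshift := rc_ncard j hj
  rw [hA, hB, hTop j, hTop (j-1)]
  push_cast
  omega
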